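/- Let G be a nice graph with maximum degree Δ, and let x be the minimum over all proper labellings ℓ of G of max_u σ_ℓ(u). Then x ≤ MV^W(G) + Δ and MV^W(G) + Δ ≤ 3Δ(1 + x). -/

import Mathlib

open SimpleGraph Finset

variable {V : Type*}

/-- `W.inc u` is the number of edge-traversals of the walk `W` incident to `u`. -/
def SimpleGraph.Walk.inc [DecidableEq V] {G : SimpleGraph V} {a b : V}
    (W : G.Walk a b) (u : V) : ℕ :=
  (W.edges.filter (fun e => u ∈ e)).length

/-- A walk `W` of `G` is irregularising if in the multigraph `G + W` no two
adjacent vertices have the same degree. -/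
def SimpleGraph.Walk.Irregularising [Fintype V] [DecidableEq V] {G : SimpleGraph V}
    [DecidableRel G.Adj] {a b : V} (W : G.Walk a b) : Prop :=
  ∀ ⦃u v : V⦄, G.Adj u v → G.degree u + W.inc u ≠ G.degree v + W.inc v

/-- The vertex sum `σ_ℓ(u)` of a labelling. -/
def vertexSum [Fintype V] [DecidableEq V] (G : SimpleGraph V) [DecidableRel G.Adj]
    (ℓ : Sym2 V → ℕ) (u : V) : ℕ :=
  ∑ w ∈ G.neighborFinset u, ℓ s(u, w)

/-- A labelling is proper if adjacent vertices get distinct sums. -/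
def IsProperLabelling [Fintype V] [DecidableEq V] (G : SimpleGraph V) [DecidableRel G.Adj]
    (ℓ : Sym2 V → ℕ) : Prop :=
  ∀ ⦃u v : V⦄, G.Adj u v → vertexSum G ℓ u ≠ vertexSum G ℓ v

/-- Minimum length of an irregularising walk, as an extended natural number. -/
noncomputable def MLW [Fintype V] [DecidableEq V] (G : SimpleGraph V) [DecidableRel G.Adj] : ℕ∞ :=
  ⨅ (a : V) (b : V) (W : G.Walk a b) (_ : W.Irregularising), (W.length : ℕ∞)

/-- Infimum over irregularising walks of the maximum number of traversals of a single edge. -/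
noncomputable def MEW [Fintype V] [DecidableEq V] (G : SimpleGraph V) [DecidableRel G.Adj] : ℕ∞ :=
  ⨅ (a : V) (b : V) (W : G.Walk a b) (_ : W.Irregularising),
    ((W.edges.toFinset.sup fun e => W.edges.count e : ℕ) : ℕ∞)

/-- Infimum over irregularising walks of `max_u inc_W(u)`. -/
noncomputable def MVW [Fintype V] [DecidableEq V] (G : SimpleGraph V) [DecidableRel G.Adj] : ℕ∞ :=
  ⨅ (a : V) (b : V) (W : G.Walk a b) (_ : W.Irregularising),
    ((Finset.univ.sup fun u => W.inc u : ℕ) : ℕ∞)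


/-- The subgraph of `G` consisting of edges with positive capacity `t`. -/
def posSub (G : SimpleGraph V) (t : Sym2 V → ℕ) : SimpleGraph V where
  Adj u v := G.Adj u v ∧ t s(u, v) ≠ 0
  symm := by
    constructor
    intro u v ⟨h1, h2⟩
    exact ⟨h1.symm, by rwa [Sym2.eq_swap]⟩
  loopless := by
    constructor
    intro u ⟨h1, _⟩
    exact G.loopless.irrefl u h1

lemma reach_step {G : SimpleGraph V} {t t2 : Sym2 V → ℕ} {b : V}
    (hsur : ∀ u v : V, (posSub G t).Adj u v → (posSub G t).Reachable b u →
      (posSub G t2).Adj u v) :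
    ∀ {x u : V}, (posSub G t).Walk x u → (posSub G t).Reachable b x →
      (posSub G t2).Reachable x u := by
  intro x u w
  induction w with
  | nil => exact fun _ => Reachable.refl _
  | cons h p ih =>
    intro hbx
    exact ((hsur _ _ h hbx).reachable).trans (ih (hbx.trans h.reachable))

lemma reach_split {G : SimpleGraph V} {t t' : Sym2 V → ℕ} {a b : V}
    (hsur : ∀ u v : V, (posSub G t).Adj u v → (posSub G t').Adj u v ∨ s(u, v) = s(a, b)) :
    ∀ {x u : V}, (posSub G t).Walk x u →
      ((posSub G t').Reachable a x ∨ (posSub G t').Reachable b x) →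
      ((posSub G t').Reachable a u ∨ (posSub G t').Reachable b u) := by
  intro x u w
  induction w with
  | nil => exact id
  | cons h p ih =>
    intro hx
    apply ih
    rcases hsur _ _ h with h' | he
    · rcases hx with h1 | h1
      · exact Or.inl (h1.trans h'.reachable)
      · exact Or.inr (h1.trans h'.reachable)
    · rcases Sym2.eq_iff.mp he with ⟨rfl, rfl⟩ | ⟨rfl, rfl⟩
      · exact Or.inr (Reachable.refl _)
      · exact Or.inl (Reachable.refl _)

lemma keyNe {D A B p q : ℕ} (hp : p < D) (hq : q < D) (hAB : A ≠ B) :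
    D * A + p ≠ D * B + q := by
  intro h
  rcases hAB.lt_or_gt with h1 | h1
  · have h2 : D * (A + 1) ≤ D * B := Nat.mul_le_mul_left _ h1
    rw [Nat.mul_add, Nat.mul_one] at h2
    have := h2.trans (Nat.le_add_right _ q)
    omega
  · have h2 : D * (B + 1) ≤ D * A := Nat.mul_le_mul_left _ h1
    rw [Nat.mul_add, Nat.mul_one] at h2
    have := h2.trans (Nat.le_add_right _ p)
    omega

lemma count_filter_mem [Fintype V] [DecidableEq V] (G : SimpleGraph V) [DecidableRel G.Adj]
    (u : V) :
    ∀ L : List (Sym2 V), (∀ e ∈ L, e ∈ G.edgeSet) →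
      (L.filter (fun e => u ∈ e)).length = ∑ v ∈ G.neighborFinset u, L.count s(u, v) := by
  intro L
  induction L with
  | nil => simp
  | cons e L ih =>
    intro hL
    have hLt : ∀ e ∈ L, e ∈ G.edgeSet := fun e he => hL e (List.mem_cons_of_mem _ he)
    by_cases hu : u ∈ e
    · obtain ⟨v, rfl⟩ := Sym2.mem_iff_exists.mp hu
      have hadj : G.Adj u v := G.mem_edgeSet.mp (hL _ List.mem_cons_self)
      have hv : v ∈ G.neighborFinset u := by rwa [mem_neighborFinset]
      have hcount : ∀ v' : V, ((s(u, v) :: L).count s(u, v'))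
          = L.count s(u, v') + if v' = v then 1 else 0 := by
        intro v'
        rw [List.count_cons]
        congr 1
        simp only [beq_iff_eq, Sym2.congr_right]
        by_cases h : v' = v
        · simp [h]
        · simp [h, Ne.symm h]
      rw [Finset.sum_congr rfl (fun v' _ => hcount v'), Finset.sum_add_distrib,
        Finset.sum_ite_eq' (G.neighborFinset u) v (fun _ => 1), if_pos hv, ← ih hLt]
      simp [hu]
    · have hcount : ∀ v' ∈ G.neighborFinset u, ((e :: L).count s(u, v')) = L.count s(u, v') := by
        intro v' _
        refine List.count_cons_of_ne (fun h => hu ?_)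
        rw [h]
        exact Sym2.mem_mk_left u v'
      rw [Finset.sum_congr rfl hcount, ← ih hLt]
      simp [hu]

lemma inc_eq_sum [Fintype V] [DecidableEq V] {G : SimpleGraph V} [DecidableRel G.Adj]
    {a b : V} (W : G.Walk a b) (u : V) :
    W.inc u = ∑ v ∈ G.neighborFinset u, W.edges.count s(u, v) :=
  count_filter_mem G u W.edges (fun e he => W.edges_subset_edgeSet he)

lemma euler_walk [Fintype V] [DecidableEq V] (G : SimpleGraph V) [DecidableRel G.Adj] :
    ∀ (N : ℕ) (t : Sym2 V → ℕ) (a : V),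
      (∑ e ∈ G.edgeFinset, t e) ≤ N →
      (∀ e, t e ≠ 0 → e ∈ G.edgeSet) →
      (∀ e, Even (t e)) →
      (∀ u v : V, G.Adj u v → t s(u, v) ≠ 0 → (posSub G t).Reachable a u) →
      ∃ W : G.Walk a a, ∀ e, W.edges.count e = t e := by
  intro N
  induction N using Nat.strong_induction_on with
  | _ N IH =>
  intro t a hsum hsupp heven hreach
  classical
  by_cases hex : ∃ b, G.Adj a b ∧ t s(a, b) ≠ 0
  · obtain ⟨b, hab, htab⟩ := hex
    have ht2 : 2 ≤ t s(a, b) := by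
      obtain ⟨k, hk⟩ := heven s(a, b); omega
    set t' : Sym2 V → ℕ := fun e => if e = s(a, b) then t e - 2 else t e with ht'def
    have ht'ab : t' s(a, b) = t s(a, b) - 2 := by simp [ht'def]
    have ht'le : ∀ e, t' e ≤ t e := by
      intro e; dsimp [t']; split <;> omega
    have hts : ∑ e ∈ G.edgeFinset, t' e < ∑ e ∈ G.edgeFinset, t e := by
      apply Finset.sum_lt_sum (fun e _ => ht'le e)
      refine ⟨s(a, b), by rwa [mem_edgeFinset, mem_edgeSet], ?_⟩
      rw [ht'ab]; omega
    have hN' : ∑ e ∈ G.edgeFinset, t' e < N := lt_of_lt_of_le hts hsum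
    set P : Sym2 V → Prop := fun e => ∃ w, w ∈ e ∧ (posSub G t').Reachable b w with hPdef
    set ta : Sym2 V → ℕ := fun e => if P e then 0 else t' e with htadef
    set tb : Sym2 V → ℕ := fun e => if P e then t' e else 0 with htbdef
    have hsplit : ∀ e, ta e + tb e = t' e := by
      intro e; dsimp [ta, tb]; split <;> omega
    have hta_le : ∀ e, ta e ≤ t' e := fun e => by dsimp [ta]; split <;> omega
    have htb_le : ∀ e, tb e ≤ t' e := fun e => by dsimp [tb]; split <;> omega
    -- coverage lemma from t to t'
    have hsur1 : ∀ u v : V, (posSub G t).Adj u v →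
        (posSub G t').Adj u v ∨ s(u, v) = s(a, b) := by
      intro u v ⟨hadj, hne⟩
      by_cases h : s(u, v) = s(a, b)
      · exact Or.inr h
      · exact Or.inl ⟨hadj, by dsimp [t']; rwa [if_neg h]⟩
    -- reachability transfer to tb
    have reach_b : ∀ u : V, (posSub G t').Reachable b u → (posSub G tb).Reachable b u := by
      intro u h
      obtain ⟨w⟩ := h
      refine reach_step ?_ w (Reachable.refl b)
      intro u v hadj hbu
      refine ⟨hadj.1, ?_⟩
      dsimp [tb]
      rw [if_pos ⟨u, Sym2.mem_mk_left u v, hbu⟩]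
      exact hadj.2
    -- reachability transfer to ta (when a is not reachable from b)
    have reach_a : ∀ u : V, ¬ (posSub G t').Reachable b a →
        (posSub G t').Reachable a u → (posSub G ta).Reachable a u := by
      intro u hnba h
      obtain ⟨w⟩ := h
      refine reach_step ?_ w (Reachable.refl a)
      intro u v hadj hau
      refine ⟨hadj.1, ?_⟩
      dsimp [ta]
      rw [if_neg ?_]
      · exact hadj.2
      rintro ⟨w, hw, hbw⟩
      apply hnba
      have hwu : (posSub G t').Reachable w u := by
        rcases Sym2.mem_iff.mp hw with rfl | rfl
        · exact Reachable.refl _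
        · exact hadj.symm.reachable
      exact (hbw.trans hwu).trans hau.symm
    -- hypotheses for the recursive call on ta
    have ha_hyp : ∀ u v : V, G.Adj u v → ta s(u, v) ≠ 0 → (posSub G ta).Reachable a u := by
      intro u v hadj hne
      have hnP : ¬ P s(u, v) ∧ t' s(u, v) ≠ 0 := by
        dsimp [ta] at hne
        by_cases h : P s(u, v)
        · rw [if_pos h] at hne; exact absurd rfl hne
        · rw [if_neg h] at hne; exact ⟨h, hne⟩
      have htne : t s(u, v) ≠ 0 := fun h0 => hnP.2 (by
        have := ht'le s(u, v); omega)
      have h1 : (posSub G t).Reachable a u := hreach u v hadj htne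
      obtain ⟨w1⟩ := h1
      have h2 := reach_split hsur1 w1 (Or.inl (Reachable.refl a))
      rcases h2 with h2 | h2
      · refine reach_a u ?_ h2
        intro hba
        apply hnP.1
        exact ⟨u, Sym2.mem_mk_left u v, hba.trans h2⟩
      · exact absurd ⟨u, Sym2.mem_mk_left u v, h2⟩ hnP.1
    -- hypotheses for the recursive call on tb
    have hb_hyp : ∀ u v : V, G.Adj u v → tb s(u, v) ≠ 0 → (posSub G tb).Reachable b u := by
      intro u v hadj hne
      have hP : P s(u, v) ∧ t' s(u, v) ≠ 0 := by
        dsimp [tb] at hne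
        by_cases h : P s(u, v)
        · rw [if_pos h] at hne; exact ⟨h, hne⟩
        · rw [if_neg h] at hne; exact absurd rfl hne
      obtain ⟨⟨w, hw, hbw⟩, ht'ne⟩ := hP
      have hwu : (posSub G t').Reachable w u := by
        rcases Sym2.mem_iff.mp hw with rfl | rfl
        · exact Reachable.refl _
        · exact Reachable.symm (Adj.reachable ⟨hadj, ht'ne⟩)
      exact reach_b u (hbw.trans hwu)
    -- recursive calls
    have hsum' : ∑ e ∈ G.edgeFinset, t' e ≤ ∑ e ∈ G.edgeFinset, t' e := le_rfl
    have hsupp' : ∀ e, t' e ≠ 0 → e ∈ G.edgeSet := by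
      intro e he
      exact hsupp e (fun h0 => he (Nat.le_zero.mp (h0 ▸ ht'le e)))
    have heven' : ∀ e, Even (t' e) := by
      intro e
      dsimp [t']
      split
      · obtain ⟨k, hk⟩ := heven e; exact ⟨k - 1, by omega⟩
      · exact heven e
    obtain ⟨Wa, hWa⟩ := IH _ hN' ta a
      (le_trans (Finset.sum_le_sum fun e _ => hta_le e) hsum')
      (fun e he => hsupp' e (fun h0 => he (Nat.le_zero.mp (h0 ▸ hta_le e))))
      (fun e => by
        dsimp [ta]; split
        · exact Even.zero
        · exact heven' e) ha_hyp
    obtain ⟨Wb, hWb⟩ := IH _ hN' tb b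
      (le_trans (Finset.sum_le_sum fun e _ => htb_le e) hsum')
      (fun e he => hsupp' e (fun h0 => he (Nat.le_zero.mp (h0 ▸ htb_le e))))
      (fun e => by
        dsimp [tb]; split
        · exact heven' e
        · exact Even.zero) hb_hyp
    refine ⟨Walk.cons hab (Wb.append (Walk.cons hab.symm Wa)), fun e => ?_⟩
    rw [Walk.edges_cons, Walk.edges_append, Walk.edges_cons]
    rw [List.count_cons, List.count_append, List.count_cons]
    rw [hWa e, hWb e]
    have hsw : s(b, a) = s(a, b) := Sym2.eq_swap
    rw [hsw]
    have hse := hsplit e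
    simp only [beq_iff_eq]
    by_cases he : s(a, b) = e
    · subst he
      rw [if_pos rfl]
      rw [ht'ab] at hse
      omega
    · rw [if_neg he]
      have ht'e : t' e = t e := by
        dsimp [t']; rw [if_neg (fun h => he h.symm)]
      omega
  · refine ⟨Walk.nil, fun e => ?_⟩
    simp only [Walk.edges_nil, List.count_nil]
    by_contra h0
    have hne : t e ≠ 0 := fun h => h0 h.symm
    have hee := hsupp e hne
    induction e using Sym2.ind with
    | _ u v =>
    have hadj : G.Adj u v := G.mem_edgeSet.mp hee
    have hr := hreach u v hadj hne
    obtain ⟨w⟩ := hr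
    cases w with
    | nil => exact hex ⟨v, hadj, hne⟩
    | cons h p => exact hex ⟨_, h.1, h.2⟩

/-- If `G` is a nice graph with maximum degree `Δ` and `x` is the minimum
over proper labellings `ℓ` of `G` of `max_u σ_ℓ(u)`, then `x ≤ MV^W(G) + Δ` and
`MV^W(G) + Δ ≤ 3Δ(1 + x)`. -/
theorem stmt_8 {V : Type*} [Fintype V] [DecidableEq V] (G : SimpleGraph V)
    [DecidableRel G.Adj] (hconn : G.Connected)
    (hK2 : ¬ Nonempty (G ≃g (⊤ : SimpleGraph (Fin 2))))
    (x : ℕ)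
    (hx : IsLeast {s : ℕ | ∃ ℓ : Sym2 V → ℕ, (∀ e ∈ G.edgeSet, 1 ≤ ℓ e) ∧
      IsProperLabelling G ℓ ∧ (Finset.univ.sup fun u => vertexSum G ℓ u) = s} x) :
    (x : ℕ∞) ≤ MVW G + (G.maxDegree : ℕ∞) ∧
      MVW G + (G.maxDegree : ℕ∞) ≤ 3 * (G.maxDegree : ℕ∞) * (1 + (x : ℕ∞)) := by
  classical
  obtain ⟨a⟩ := hconn.nonempty
  obtain ⟨⟨ℓ₀, hℓ₀pos, hℓ₀prop, hℓ₀sup⟩, hlb⟩ := hx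
  constructor
  · -- x ≤ MVW + Δ
    rw [← tsub_le_iff_right]
    refine le_iInf fun a' => le_iInf fun b' => le_iInf fun W => le_iInf fun hW => ?_
    rw [tsub_le_iff_right]
    have key : x ≤ (Finset.univ.sup fun u => W.inc u) + G.maxDegree := by
      have hσ : ∀ u, vertexSum G (fun e => 1 + W.edges.count e) u
          = G.degree u + W.inc u := by
        intro u
        rw [vertexSum, inc_eq_sum W u, Finset.sum_add_distrib, Finset.sum_const,
          smul_eq_mul, mul_one]
        rfl
      have hproper : IsProperLabelling G (fun e => 1 + W.edges.count e) := by
        intro u v hadj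
        rw [hσ u, hσ v]
        exact hW hadj
      have hxle : x ≤ Finset.univ.sup fun u => vertexSum G (fun e => 1 + W.edges.count e) u :=
        hlb ⟨fun e => 1 + W.edges.count e, fun e _ => Nat.le_add_right 1 _, hproper, rfl⟩
      refine le_trans hxle (Finset.sup_le fun u _ => ?_)
      rw [hσ u]
      have h1 : G.degree u ≤ G.maxDegree := G.degree_le_maxDegree u
      have h2 : W.inc u ≤ Finset.univ.sup fun u => W.inc u := Finset.le_sup (mem_univ u)
      omega
    exact_mod_cast key
  · by_cases hE : ∃ u v, G.Adj u v
    · obtain ⟨u0, v0, huv⟩ := hE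
      have hΔ1 : 1 ≤ G.maxDegree := by
        have h1 : 0 < G.degree u0 := (G.degree_pos_iff_exists_adj u0).mpr ⟨v0, huv⟩
        have h2 := G.degree_le_maxDegree u0
        omega
      set D := G.maxDegree with hDdef
      set t : Sym2 V → ℕ := fun e => if e ∈ G.edgeFinset then 2 * D * ℓ₀ e else 0 with htdef
      have htedge : ∀ u v : V, G.Adj u v → t s(u, v) = 2 * D * ℓ₀ s(u, v) := by
        intro u v h
        dsimp [t]
        rw [if_pos (by rwa [mem_edgeFinset, mem_edgeSet])]
      have hposSub : posSub G t = G := by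
        ext u v
        constructor
        · rintro ⟨h, _⟩; exact h
        · intro h
          refine ⟨h, ?_⟩
          rw [htedge u v h]
          have hl := hℓ₀pos s(u, v) (G.mem_edgeSet.mpr h)
          exact Nat.mul_ne_zero (Nat.mul_ne_zero two_ne_zero (by omega)) (by omega)
      obtain ⟨W, hW⟩ := euler_walk G (∑ e ∈ G.edgeFinset, t e) t a le_rfl
        (fun e he => by
          dsimp [t] at he
          by_cases h : e ∈ G.edgeFinset
          · rwa [← mem_edgeFinset]
          · rw [if_neg h] at he; exact absurd rfl he)
        (fun e => by
          dsimp [t]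
          split
          · exact ⟨D * ℓ₀ e, by ring⟩
          · exact Even.zero)
        (fun u v hadj hne => by rw [hposSub]; exact hconn.preconnected a u)
      have hinc : ∀ u, W.inc u = 2 * D * vertexSum G ℓ₀ u := by
        intro u
        rw [inc_eq_sum W u, vertexSum, Finset.mul_sum]
        refine Finset.sum_congr rfl fun v hv => ?_
        rw [hW s(u, v), htedge u v ((mem_neighborFinset G u v).mp hv)]
      have hirr : W.Irregularising := by
        intro u v hadj
        rw [hinc u, hinc v]
        have hdu : G.degree u < 2 * D := by
          have := G.degree_le_maxDegree u; omega
        have hdv : G.degree v < 2 * D := by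
          have := G.degree_le_maxDegree v; omega
        have hne := hℓ₀prop hadj
        intro h
        rw [Nat.add_comm (G.degree u), Nat.add_comm (G.degree v)] at h
        exact keyNe hdu hdv hne h
      have hsup : (Finset.univ.sup fun u => W.inc u) ≤ 2 * D * x := by
        refine Finset.sup_le fun u _ => ?_
        rw [hinc u]
        have hu : vertexSum G ℓ₀ u ≤ x := hℓ₀sup ▸ Finset.le_sup (mem_univ u)
        exact Nat.mul_le_mul_left _ hu
      have hMVW : MVW G ≤ ((2 * D * x : ℕ) : ℕ∞) := by
        refine le_trans (iInf_le_of_le a (iInf_le_of_le a (iInf_le_of_le W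
          (iInf_le_of_le hirr le_rfl)))) ?_
        exact_mod_cast hsup
      calc MVW G + (D : ℕ∞) ≤ ((2 * D * x : ℕ) : ℕ∞) + ((D : ℕ) : ℕ∞) :=
            add_le_add_left hMVW _
        _ = ((2 * D * x + D : ℕ) : ℕ∞) := by push_cast; ring
        _ ≤ ((3 * D * (1 + x) : ℕ) : ℕ∞) := Nat.cast_le.mpr (by nlinarith)
        _ = 3 * (D : ℕ∞) * (1 + (x : ℕ∞)) := by push_cast; ring
    · push_neg at hE
      have hirr : (Walk.nil : G.Walk a a).Irregularising := fun u v h => absurd h (hE u v)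
      have hsup0 : (Finset.univ.sup fun u => (Walk.nil : G.Walk a a).inc u) = 0 :=
        Nat.le_zero.mp (Finset.sup_le fun u _ => by simp [SimpleGraph.Walk.inc])
      have hMVW : MVW G = 0 := by
        refine le_antisymm ?_ zero_le
        refine le_trans (iInf_le_of_le a (iInf_le_of_le a (iInf_le_of_le Walk.nil
          (iInf_le_of_le hirr le_rfl)))) ?_
        rw [hsup0]
        exact le_rfl
      rw [hMVW, zero_add]
      have h1 : (G.maxDegree : ℕ∞) ≤ 3 * (G.maxDegree : ℕ∞) :=
        le_mul_of_one_le_left' (by norm_num : (1 : ℕ∞) ≤ 3)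
      have h2 : 3 * (G.maxDegree : ℕ∞) ≤ 3 * (G.maxDegree : ℕ∞) * (1 + (x : ℕ∞)) :=
        le_mul_of_one_le_right' le_self_add
      exact le_trans h1 h2
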